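/- Let n ≥ 3 be an integer, s ∈ (0,1), γ > 0, c ∈ ℝ, and let Ω ⊂ ℝⁿ be a bounded open set with B₂ ⊆ Ω, where B_r denotes the open Euclidean ball of radius r centered at the origin. For ρ ∈ (0,1) define φ_ρ : ℝⁿ → ℝ by φ_ρ(x) := c + 1 if |x| < ρ; φ_ρ(x) := c + (ρ^γ/(1 − ρ^γ))·(|x|^{−γ} − 1) if ρ ≤ |x| < 1; and φ_ρ(x) := c if |x| ≥ 1. Then, with Q := ℝ²ⁿ \ ((ℝⁿ\Ω)×(ℝⁿ\Ω)), one has lim_{ρ→0⁺} ∬_Q |φ_ρ(x) − φ_ρ(y)|²/|x−y|^{n+2s} dx dy = 0. -/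

import Mathlib

open MeasureTheory Set
open scoped ENNReal Topology

noncomputable section

abbrev Rn (n : ℕ) : Type := EuclideanSpace ℝ (Fin n)

/-- The cross-shaped region `Q := ℝ²ⁿ \ ((ℝⁿ\Ω)×(ℝⁿ\Ω))`. -/
def QQ {n : ℕ} (Ω : Set (Rn n)) : Set (Rn n × Rn n) := ((Ωᶜ) ×ˢ (Ωᶜ))ᶜ

/-- The Gagliardo-type energy `∬_Q |u(x)-u(y)|²/|x-y|^{n+2s} dx dy`, valued in `[0,∞]`. -/
def gagEnergy (n : ℕ) (s : ℝ) (Ω : Set (Rn n)) (u : Rn n → ℝ) : ℝ≥0∞ :=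
  ∫⁻ p in QQ Ω, ENNReal.ofReal (|u p.1 - u p.2| ^ 2 / ‖p.1 - p.2‖ ^ ((n : ℝ) + 2 * s))

/-- The radial auxiliary function `φ_ρ` of power type. -/
def phiRho (n : ℕ) (γ c ρ : ℝ) (x : Rn n) : ℝ :=
  if ‖x‖ < ρ then c + 1
  else if ‖x‖ < 1 then c + ρ ^ γ / (1 - ρ ^ γ) * (‖x‖ ^ (-γ) - 1)
  else c

/-! ### Auxiliary lemmas -/

lemma st18_rpow_lip {γ u v : ℝ} (hγ : 0 < γ) (hu : 0 < u) (huv : u ≤ v) :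
    |v ^ (-γ) - u ^ (-γ)| ≤ γ * u ^ (-γ - 1) * (v - u) := by
  have h := Convex.norm_image_sub_le_of_norm_hasDerivWithin_le
    (f := fun t : ℝ => t ^ (-γ)) (f' := fun t : ℝ => (-γ) * t ^ (-γ - 1))
    (s := Set.Icc u v) (C := γ * u ^ (-γ - 1)) ?_ ?_ (convex_Icc u v)
    (Set.left_mem_Icc.2 huv) (Set.right_mem_Icc.2 huv)
  · simpa [Real.norm_eq_abs, abs_of_nonneg (sub_nonneg.2 huv)] using h
  · intro t ht
    exact (Real.hasDerivAt_rpow_const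
      (Or.inl (ne_of_gt (lt_of_lt_of_le hu ht.1)))).hasDerivWithinAt
  · intro t ht
    have ht0 : 0 < t := lt_of_lt_of_le hu ht.1
    rw [Real.norm_eq_abs, abs_mul, abs_neg, abs_of_nonneg hγ.le,
      abs_of_nonneg (Real.rpow_nonneg ht0.le _)]
    exact mul_le_mul_of_nonneg_left
      (Real.rpow_le_rpow_of_nonpos hu ht.1 (by linarith)) hγ.le

lemma st18_clamp_lip (ρ a b : ℝ) :
    |max ρ (min a 1) - max ρ (min b 1)| ≤ |a - b| := by
  rw [max_comm ρ (min a 1), max_comm ρ (min b 1)]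
  refine (abs_max_sub_max_le_abs _ _ _).trans ?_
  have h := abs_min_sub_min_le_max a 1 b 1
  rwa [sub_self, abs_zero, max_eq_left (abs_nonneg _)] at h

lemma st18_A_one {γ ρ : ℝ} (hγ : 0 < γ) (hρ0 : 0 < ρ) (hρ1 : ρ < 1) :
    ρ ^ γ / (1 - ρ ^ γ) * (ρ ^ (-γ) - 1) = 1 := by
  have hρg1 : ρ ^ γ < 1 := Real.rpow_lt_one hρ0.le hρ1 hγ
  have hρg0 : 0 < ρ ^ γ := Real.rpow_pos_of_pos hρ0 γ
  have h2 : 1 - ρ ^ γ ≠ 0 := ne_of_gt (by linarith)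
  rw [Real.rpow_neg hρ0.le, div_mul_eq_mul_div, mul_sub,
    mul_inv_cancel₀ hρg0.ne', mul_one, div_self h2]

lemma st18_phi_eq {n : ℕ} {γ c ρ : ℝ} (hγ : 0 < γ) (hρ0 : 0 < ρ) (hρ1 : ρ < 1) (x : Rn n) :
    phiRho n γ c ρ x
      = c + ρ ^ γ / (1 - ρ ^ γ) * ((max ρ (min ‖x‖ 1)) ^ (-γ) - 1) := by
  unfold phiRho
  rcases lt_or_ge ‖x‖ ρ with h1 | h1
  · rw [if_pos h1]
    have hx1 : ‖x‖ < 1 := h1.trans hρ1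
    rw [min_eq_left hx1.le, max_eq_left h1.le, st18_A_one hγ hρ0 hρ1]
  · rw [if_neg (not_lt.2 h1)]
    rcases lt_or_ge ‖x‖ 1 with h2 | h2
    · rw [if_pos h2, min_eq_left h2.le, max_eq_right h1]
    · rw [if_neg (not_lt.2 h2), min_eq_right h2, max_eq_right hρ1.le, Real.one_rpow]
      ring

lemma st18_phi_const {n : ℕ} {γ c ρ : ℝ} (hρ1 : ρ < 1) {x : Rn n} (hx : 1 ≤ ‖x‖) :
    phiRho n γ c ρ x = c := by
  rw [phiRho, if_neg (not_lt.2 (by linarith)), if_neg (not_lt.2 hx)]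

def st18_K (n : ℕ) (γ ρ : ℝ) (x : Rn n) : ℝ :=
  ρ ^ γ / (1 - ρ ^ γ) * γ * (max ρ ‖x‖) ^ (-γ - 1)

lemma st18_diff_le {n : ℕ} {γ c ρ : ℝ} (hγ : 0 < γ) (hρ0 : 0 < ρ) (hρ1 : ρ < 1)
    {x y : Rn n} (hxy : ‖x‖ ≤ ‖y‖) :
    |phiRho n γ c ρ x - phiRho n γ c ρ y|
      ≤ min 1 (st18_K n γ ρ x * ‖x - y‖) := by
  have hρg1 : ρ ^ γ < 1 := Real.rpow_lt_one hρ0.le hρ1 hγ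
  have hρg0 : 0 < ρ ^ γ := Real.rpow_pos_of_pos hρ0 γ
  have hA : 0 < ρ ^ γ / (1 - ρ ^ γ) := div_pos hρg0 (by linarith)
  set u := max ρ (min ‖x‖ 1) with hu
  set v := max ρ (min ‖y‖ 1) with hv
  have hu0 : 0 < u := lt_of_lt_of_le hρ0 (le_max_left _ _)
  have hv0 : 0 < v := lt_of_lt_of_le hρ0 (le_max_left _ _)
  have huv : u ≤ v := max_le_max le_rfl (min_le_min hxy le_rfl)
  have hvu : v ^ (-γ) ≤ u ^ (-γ) :=
    Real.rpow_le_rpow_of_nonpos hu0 huv (by linarith)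
  rw [st18_phi_eq hγ hρ0 hρ1 x, st18_phi_eq hγ hρ0 hρ1 y]
  have hdiff : c + ρ ^ γ / (1 - ρ ^ γ) * (u ^ (-γ) - 1)
      - (c + ρ ^ γ / (1 - ρ ^ γ) * (v ^ (-γ) - 1))
      = ρ ^ γ / (1 - ρ ^ γ) * (u ^ (-γ) - v ^ (-γ)) := by ring
  rw [hdiff, abs_mul, abs_of_nonneg hA.le, abs_of_nonneg (sub_nonneg.2 hvu)]
  refine le_min ?_ ?_
  · have h1 : u ^ (-γ) ≤ ρ ^ (-γ) :=
      Real.rpow_le_rpow_of_nonpos hρ0 (le_max_left _ _) (by linarith)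
    have h2 : (1:ℝ) ≤ v ^ (-γ) := by
      have hv1 : v ≤ 1 := max_le hρ1.le (min_le_right _ _)
      calc (1:ℝ) = (1:ℝ) ^ (-γ) := (Real.one_rpow _).symm
        _ ≤ v ^ (-γ) := Real.rpow_le_rpow_of_nonpos hv0 hv1 (by linarith)
    calc ρ ^ γ / (1 - ρ ^ γ) * (u ^ (-γ) - v ^ (-γ))
        ≤ ρ ^ γ / (1 - ρ ^ γ) * (ρ ^ (-γ) - 1) :=
          mul_le_mul_of_nonneg_left (by linarith) hA.le
      _ = 1 := st18_A_one hγ hρ0 hρ1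
  · rcases le_or_gt ‖x‖ 1 with hx1 | hx1
    · have hueq : u = max ρ ‖x‖ := by rw [hu, min_eq_left hx1]
      have hlip : u ^ (-γ) - v ^ (-γ) ≤ γ * u ^ (-γ - 1) * (v - u) := by
        have h1 := st18_rpow_lip hγ hu0 huv
        have h2 : u ^ (-γ) - v ^ (-γ) ≤ |v ^ (-γ) - u ^ (-γ)| := by
          rw [abs_sub_comm]; exact le_abs_self _
        linarith
      have hvun : v - u ≤ ‖x - y‖ := by
        have h1 := st18_clamp_lip ρ ‖y‖ ‖x‖
        have h2 : |‖y‖ - ‖x‖| ≤ ‖y - x‖ := abs_norm_sub_norm_le y x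
        have h3 : v - u ≤ |v - u| := le_abs_self _
        have h4 : |v - u| = |max ρ (min ‖y‖ 1) - max ρ (min ‖x‖ 1)| := by rw [hu, hv]
        rw [norm_sub_rev] at h2
        calc v - u ≤ |v - u| := h3
          _ ≤ |‖y‖ - ‖x‖| := by rw [h4]; exact h1
          _ ≤ ‖x - y‖ := h2
      calc ρ ^ γ / (1 - ρ ^ γ) * (u ^ (-γ) - v ^ (-γ))
          ≤ ρ ^ γ / (1 - ρ ^ γ) * (γ * u ^ (-γ - 1) * (v - u)) :=
            mul_le_mul_of_nonneg_left hlip hA.le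
        _ = (ρ ^ γ / (1 - ρ ^ γ) * γ * u ^ (-γ - 1)) * (v - u) := by ring
        _ ≤ (ρ ^ γ / (1 - ρ ^ γ) * γ * u ^ (-γ - 1)) * ‖x - y‖ := by
            apply mul_le_mul_of_nonneg_left hvun
            have := Real.rpow_nonneg hu0.le (-γ - 1)
            positivity
        _ = st18_K n γ ρ x * ‖x - y‖ := by rw [st18_K, hueq]
    · have hy1 : (1:ℝ) ≤ ‖y‖ := le_trans hx1.le hxy
      have hueq : u = 1 := by rw [hu, min_eq_right hx1.le, max_eq_right hρ1.le]
      have hveq : v = 1 := by rw [hv, min_eq_right hy1, max_eq_right hρ1.le]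
      rw [hueq, hveq, sub_self, mul_zero]
      have h0 : 0 ≤ st18_K n γ ρ x := by
        have h1 : 0 < max ρ ‖x‖ := lt_of_lt_of_le hρ0 (le_max_left _ _)
        have h2 := Real.rpow_nonneg h1.le (-γ - 1)
        rw [st18_K]; positivity
      positivity

lemma st18_ball {n : ℕ} (hn : 1 ≤ n) {a : ℝ} (ha0 : 0 < a) (han : a < n) :
    ∫⁻ x in Metric.closedBall (0 : Rn n) 1, ENNReal.ofReal (‖x‖ ^ (-a)) < ∞ := by
  set μ := (volume : Measure (Rn n)).restrict (Metric.closedBall 0 1) with hμ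
  have hmeas : AEMeasurable (fun x : Rn n => ‖x‖ ^ (-a)) μ := by fun_prop
  have heq : (∫⁻ x in Metric.closedBall (0 : Rn n) 1, ENNReal.ofReal (‖x‖ ^ (-a)))
      = ∫⁻ t in Ioi (0:ℝ), μ {x | t ≤ ‖x‖ ^ (-a)} :=
    lintegral_eq_lintegral_meas_le μ
      (Filter.Eventually.of_forall fun x => Real.rpow_nonneg (norm_nonneg x) _) hmeas
  rw [heq]
  have hq : (-a)⁻¹ * n < -1 := by
    have h1 : (1:ℝ) < n / a := (one_lt_div ha0).mpr han
    have : (-a)⁻¹ * (n:ℝ) = -((n:ℝ) / a) := by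
      rw [inv_neg, neg_mul, div_eq_inv_mul]
    rw [this]; linarith
  calc ∫⁻ t in Ioi (0:ℝ), μ {x | t ≤ ‖x‖ ^ (-a)}
      ≤ ∫⁻ t in Ioc (0:ℝ) 1 ∪ Ioi 1, μ {x | t ≤ ‖x‖ ^ (-a)} :=
        lintegral_mono_set Ioi_subset_Ioc_union_Ioi
    _ ≤ (∫⁻ t in Ioc (0:ℝ) 1, μ {x | t ≤ ‖x‖ ^ (-a)})
        + ∫⁻ t in Ioi (1:ℝ), μ {x | t ≤ ‖x‖ ^ (-a)} := lintegral_union_le _ _ _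
    _ < ∞ := by
        apply ENNReal.add_lt_top.2
        constructor
        · calc ∫⁻ t in Ioc (0:ℝ) 1, μ {x | t ≤ ‖x‖ ^ (-a)}
              ≤ ∫⁻ _t in Ioc (0:ℝ) 1, volume (Metric.closedBall (0 : Rn n) 1) := by
                apply setLIntegral_mono' measurableSet_Ioc
                intro t _
                calc μ {x | t ≤ ‖x‖ ^ (-a)} ≤ μ univ := measure_mono (subset_univ _)
                  _ = volume (Metric.closedBall (0 : Rn n) 1) := by
                      rw [hμ, Measure.restrict_apply_univ]
            _ = volume (Metric.closedBall (0 : Rn n) 1) * volume (Ioc (0:ℝ) 1) :=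
                setLIntegral_const _ _
            _ < ∞ := ENNReal.mul_lt_top measure_closedBall_lt_top
                (by rw [Real.volume_Ioc]; exact ENNReal.ofReal_lt_top)
        · calc ∫⁻ t in Ioi (1:ℝ), μ {x | t ≤ ‖x‖ ^ (-a)}
              ≤ ∫⁻ t in Ioi (1:ℝ),
                  ENNReal.ofReal (t ^ ((-a)⁻¹ * n)) * volume (Metric.ball (0 : Rn n) 1) := by
                apply setLIntegral_mono' measurableSet_Ioi
                intro t ht
                have ht1 : (1:ℝ) < t := ht
                have ht0 : (0:ℝ) < t := by linarith
                have hsub : {x : Rn n | t ≤ ‖x‖ ^ (-a)}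
                    ⊆ Metric.closedBall 0 (t ^ (-a)⁻¹) := by
                  intro x hx
                  simp only [mem_setOf_eq] at hx
                  rcases eq_or_lt_of_le (norm_nonneg x) with hx0 | hx0
                  · rw [mem_closedBall_zero_iff]
                    rw [← hx0]
                    exact Real.rpow_nonneg ht0.le _
                  · rw [mem_closedBall_zero_iff]
                    exact (Real.le_rpow_inv_iff_of_neg hx0 ht0
                      (neg_lt_zero.mpr ha0)).mpr hx
                have hrpos : (0:ℝ) ≤ t ^ (-a)⁻¹ := Real.rpow_nonneg ht0.le _
                calc μ {x : Rn n | t ≤ ‖x‖ ^ (-a)}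
                    ≤ volume {x : Rn n | t ≤ ‖x‖ ^ (-a)} := Measure.restrict_apply_le _ _
                  _ ≤ volume (Metric.closedBall (0 : Rn n) (t ^ (-a)⁻¹)) :=
                      measure_mono hsub
                  _ = ENNReal.ofReal ((t ^ (-a)⁻¹) ^ Module.finrank ℝ (Rn n))
                        * volume (Metric.ball (0 : Rn n) 1) :=
                      Measure.addHaar_closedBall _ _ hrpos
                  _ = ENNReal.ofReal (t ^ ((-a)⁻¹ * n)) * volume (Metric.ball (0 : Rn n) 1) := by
                      rw [finrank_euclideanSpace_fin,
                        ← Real.rpow_natCast (t ^ (-a)⁻¹) n, ← Real.rpow_mul ht0.le]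
            _ = (∫⁻ t in Ioi (1:ℝ), ENNReal.ofReal (t ^ ((-a)⁻¹ * n)))
                  * volume (Metric.ball (0 : Rn n) 1) :=
                lintegral_mul_const' _ _ measure_ball_lt_top.ne
            _ < ∞ := ENNReal.mul_lt_top
                ((integrableOn_Ioi_rpow_of_lt hq zero_lt_one).lintegral_lt_top)
                measure_ball_lt_top

lemma st18_Phi_finite {n : ℕ} (hn : 3 ≤ n) {s : ℝ} (hs0 : 0 < s) (hs1 : s < 1) :
    ∫⁻ w : Rn n, ENNReal.ofReal (min 1 ‖w‖ ^ 2 / ‖w‖ ^ ((n : ℝ) + 2 * s)) < ∞ := by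
  have hn3 : (3:ℝ) ≤ (n:ℝ) := by exact_mod_cast hn
  rw [← lintegral_add_compl (μ := volume)
    (fun w : Rn n => ENNReal.ofReal (min 1 ‖w‖ ^ 2 / ‖w‖ ^ ((n : ℝ) + 2 * s)))
    (measurableSet_closedBall (x := (0 : Rn n)) (ε := 1))]
  apply ENNReal.add_lt_top.2
  constructor
  · -- ball part
    calc ∫⁻ w in Metric.closedBall (0 : Rn n) 1,
          ENNReal.ofReal (min 1 ‖w‖ ^ 2 / ‖w‖ ^ ((n : ℝ) + 2 * s))
        ≤ ∫⁻ w in Metric.closedBall (0 : Rn n) 1,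
            ENNReal.ofReal (‖w‖ ^ (-((n : ℝ) + 2 * s - 2))) := by
          apply setLIntegral_mono' measurableSet_closedBall
          intro w _
          apply ENNReal.ofReal_le_ofReal
          rcases eq_or_lt_of_le (norm_nonneg w) with hw0 | hw0
          · have e2 : ((n : ℝ) + 2 * s) ≠ 0 := by positivity
            have e1 : (-((n : ℝ) + 2 * s - 2)) ≠ 0 := by
              have : (0:ℝ) < (n : ℝ) + 2 * s - 2 := by nlinarith
              linarith
            rw [← hw0, Real.zero_rpow e2, Real.zero_rpow e1]
            simp
          · have hden : (0:ℝ) < ‖w‖ ^ ((n : ℝ) + 2 * s) := Real.rpow_pos_of_pos hw0 _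
            have hnum : min 1 ‖w‖ ^ 2 ≤ ‖w‖ ^ 2 :=
              pow_le_pow_left₀ (le_min zero_le_one hw0.le) (min_le_right _ _) 2
            calc min 1 ‖w‖ ^ 2 / ‖w‖ ^ ((n : ℝ) + 2 * s)
                ≤ ‖w‖ ^ 2 / ‖w‖ ^ ((n : ℝ) + 2 * s) := by
                  gcongr
              _ = ‖w‖ ^ (-((n : ℝ) + 2 * s - 2)) := by
                  rw [show -((n : ℝ) + 2 * s - 2) = 2 - ((n : ℝ) + 2 * s) by ring,
                    Real.rpow_sub hw0, show ((2:ℝ)) = ((2:ℕ):ℝ) by norm_num,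
                    Real.rpow_natCast]
      _ < ∞ := st18_ball (by omega) (by nlinarith) (by push_cast; nlinarith)
  · -- complement part
    calc ∫⁻ w in (Metric.closedBall (0 : Rn n) 1)ᶜ,
          ENNReal.ofReal (min 1 ‖w‖ ^ 2 / ‖w‖ ^ ((n : ℝ) + 2 * s))
        ≤ ∫⁻ w in (Metric.closedBall (0 : Rn n) 1)ᶜ,
            ENNReal.ofReal ((2:ℝ) ^ ((n : ℝ) + 2 * s) * (1 + ‖w‖) ^ (-((n : ℝ) + 2 * s))) := by
          apply setLIntegral_mono' measurableSet_closedBall.compl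
          intro w hw
          rw [mem_compl_iff, Metric.mem_closedBall, not_le, dist_zero_right] at hw
          apply ENNReal.ofReal_le_ofReal
          have hw0 : (0:ℝ) < ‖w‖ := lt_trans one_pos hw
          have hmin : min 1 ‖w‖ = 1 := min_eq_left hw.le
          rw [hmin, one_pow]
          have h2w : 1 + ‖w‖ ≤ 2 * ‖w‖ := by linarith
          have hrp : ((1:ℝ) + ‖w‖) ^ ((n : ℝ) + 2 * s) ≤ (2 * ‖w‖) ^ ((n : ℝ) + 2 * s) :=
            Real.rpow_le_rpow (by positivity) h2w (by positivity)
          rw [Real.mul_rpow (by norm_num) hw0.le] at hrp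
          rw [Real.rpow_neg (by positivity), ← div_eq_mul_inv, one_div]
          rw [inv_le_iff_one_le_mul₀ (Real.rpow_pos_of_pos hw0 _)]
          rw [div_mul_eq_mul_div, le_div_iff₀ (Real.rpow_pos_of_pos (by positivity) _)]
          calc (1:ℝ) * ((1 + ‖w‖) ^ ((n : ℝ) + 2 * s))
              = (1 + ‖w‖) ^ ((n : ℝ) + 2 * s) := one_mul _
            _ ≤ 2 ^ ((n : ℝ) + 2 * s) * ‖w‖ ^ ((n : ℝ) + 2 * s) := hrp
      _ ≤ ∫⁻ w : Rn n,
            ENNReal.ofReal ((2:ℝ) ^ ((n : ℝ) + 2 * s) * (1 + ‖w‖) ^ (-((n : ℝ) + 2 * s))) :=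
          setLIntegral_le_lintegral _ _
      _ = ENNReal.ofReal ((2:ℝ) ^ ((n : ℝ) + 2 * s))
            * ∫⁻ w : Rn n, ENNReal.ofReal ((1 + ‖w‖) ^ (-((n : ℝ) + 2 * s))) := by
          rw [← lintegral_const_mul' _ _ ENNReal.ofReal_ne_top]
          congr 1
          funext w
          rw [← ENNReal.ofReal_mul (by positivity)]
      _ < ∞ := by
          apply ENNReal.mul_lt_top ENNReal.ofReal_lt_top
          apply finite_integral_one_add_norm
          rw [finrank_euclideanSpace_fin]
          linarith

lemma st18_scale {n : ℕ} {s : ℝ} {K : ℝ} (hK : 0 < K) (hns : 0 < (n:ℝ) + 2 * s) :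
    (∫⁻ z : Rn n, ENNReal.ofReal ((min 1 (K * ‖z‖)) ^ 2 / ‖z‖ ^ ((n:ℝ) + 2 * s)))
      = ENNReal.ofReal (K ^ (2 * s))
        * ∫⁻ w : Rn n, ENNReal.ofReal (min 1 ‖w‖ ^ 2 / ‖w‖ ^ ((n:ℝ) + 2 * s)) := by
  have hΦ : Measurable fun w : Rn n =>
      ENNReal.ofReal (min 1 ‖w‖ ^ 2 / ‖w‖ ^ ((n:ℝ) + 2 * s)) := by fun_prop
  have hKe : (0:ℝ) < K ^ ((n:ℝ) + 2 * s) := Real.rpow_pos_of_pos hK _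
  have h1 : ∀ z : Rn n,
      ENNReal.ofReal ((min 1 (K * ‖z‖)) ^ 2 / ‖z‖ ^ ((n:ℝ) + 2 * s))
        = ENNReal.ofReal (K ^ ((n:ℝ) + 2 * s))
          * ENNReal.ofReal (min 1 ‖K • z‖ ^ 2 / ‖K • z‖ ^ ((n:ℝ) + 2 * s)) := by
    intro z
    rcases eq_or_ne z 0 with rfl | hz
    · rw [smul_zero, norm_zero, mul_zero, min_eq_right zero_le_one,
        Real.zero_rpow hns.ne']
      simp
    · have hz0 : (0:ℝ) < ‖z‖ := norm_pos_iff.mpr hz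
      have hnsm : ‖K • z‖ = K * ‖z‖ := by
        rw [norm_smul, Real.norm_eq_abs, abs_of_pos hK]
      rw [← ENNReal.ofReal_mul hKe.le]
      congr 1
      rw [hnsm, Real.mul_rpow hK.le hz0.le]
      have hd : (0:ℝ) < ‖z‖ ^ ((n:ℝ) + 2 * s) := Real.rpow_pos_of_pos hz0 _
      field_simp
  calc (∫⁻ z : Rn n, ENNReal.ofReal ((min 1 (K * ‖z‖)) ^ 2 / ‖z‖ ^ ((n:ℝ) + 2 * s)))
      = ∫⁻ z : Rn n, ENNReal.ofReal (K ^ ((n:ℝ) + 2 * s))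
          * ENNReal.ofReal (min 1 ‖K • z‖ ^ 2 / ‖K • z‖ ^ ((n:ℝ) + 2 * s)) :=
        lintegral_congr h1
    _ = ENNReal.ofReal (K ^ ((n:ℝ) + 2 * s))
          * ∫⁻ z : Rn n, ENNReal.ofReal (min 1 ‖K • z‖ ^ 2 / ‖K • z‖ ^ ((n:ℝ) + 2 * s)) :=
        lintegral_const_mul' _ _ ENNReal.ofReal_ne_top
    _ = ENNReal.ofReal (K ^ ((n:ℝ) + 2 * s))
          * (ENNReal.ofReal |((K ^ Module.finrank ℝ (Rn n) : ℝ))⁻¹|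
              * ∫⁻ w : Rn n, ENNReal.ofReal (min 1 ‖w‖ ^ 2 / ‖w‖ ^ ((n:ℝ) + 2 * s))) := by
        congr 1
        calc (∫⁻ z : Rn n, ENNReal.ofReal (min 1 ‖K • z‖ ^ 2 / ‖K • z‖ ^ ((n:ℝ) + 2 * s)))
            = ∫⁻ w : Rn n, ENNReal.ofReal (min 1 ‖w‖ ^ 2 / ‖w‖ ^ ((n:ℝ) + 2 * s))
                ∂(Measure.map (fun z : Rn n => K • z) volume) :=
              (lintegral_map hΦ (measurable_id.const_smul K)).symm
          _ = _ := by
              rw [Measure.map_addHaar_smul volume hK.ne', lintegral_smul_measure, smul_eq_mul]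
    _ = ENNReal.ofReal (K ^ (2 * s))
          * ∫⁻ w : Rn n, ENNReal.ofReal (min 1 ‖w‖ ^ 2 / ‖w‖ ^ ((n:ℝ) + 2 * s)) := by
        rw [← mul_assoc, finrank_euclideanSpace_fin,
          abs_of_pos (inv_pos.mpr (pow_pos hK n)),
          ← ENNReal.ofReal_mul (Real.rpow_nonneg hK.le _)]
        congr 2
        have hKn : (0:ℝ) < K ^ n := pow_pos hK n
        rw [show (n:ℝ) + 2 * s = (n:ℝ) + 2 * s from rfl, Real.rpow_add hK,
          Real.rpow_natCast]
        field_simp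

lemma st18_K_bound {γ s ρ r β : ℝ} (hγ : 0 < γ) (hs0 : 0 < s) (hρ0 : 0 < ρ)
    (hρh : ρ ^ γ ≤ 1/2) (hr : 0 < r) (hβ0 : 0 < β) (hβ1 : β ≤ 2 * s * γ) :
    (ρ ^ γ / (1 - ρ ^ γ) * γ * (max ρ r) ^ (-γ - 1)) ^ (2 * s)
      ≤ (2 * γ) ^ (2 * s) * (ρ ^ β * r ^ (-(β + 2 * s))) := by
  set m := max ρ r with hm
  have hm0 : 0 < m := lt_of_lt_of_le hρ0 (le_max_left _ _)
  have hρm : ρ ≤ m := le_max_left _ _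
  have hrm : r ≤ m := le_max_right _ _
  have hρg0 : 0 < ρ ^ γ := Real.rpow_pos_of_pos hρ0 γ
  have hA : ρ ^ γ / (1 - ρ ^ γ) ≤ 2 * ρ ^ γ := by
    rw [div_le_iff₀ (by linarith)]
    nlinarith
  have hw0 : (0:ℝ) ≤ m ^ (-γ - 1) := Real.rpow_nonneg hm0.le _
  have hKnn : (0:ℝ) ≤ ρ ^ γ / (1 - ρ ^ γ) * γ * m ^ (-γ - 1) := by
    have hd : (0:ℝ) < 1 - ρ ^ γ := by linarith
    positivity
  have h1 : (ρ ^ γ / (1 - ρ ^ γ) * γ * m ^ (-γ - 1)) ^ (2 * s)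
      ≤ (2 * ρ ^ γ * γ * m ^ (-γ - 1)) ^ (2 * s) := by
    apply Real.rpow_le_rpow hKnn ?_ (by positivity)
    exact mul_le_mul_of_nonneg_right (mul_le_mul_of_nonneg_right hA hγ.le) hw0
  have h2 : (2 * ρ ^ γ * γ * m ^ (-γ - 1)) ^ (2 * s)
      = (2 * γ) ^ (2 * s) * (ρ ^ γ * m ^ (-γ - 1)) ^ (2 * s) := by
    rw [← Real.mul_rpow (by positivity) (by positivity)]
    congr 1
    ring
  have h3 : (ρ ^ γ * m ^ (-γ - 1)) ^ (2 * s)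
      = ρ ^ (γ * (2 * s)) * m ^ ((-γ - 1) * (2 * s)) := by
    rw [Real.mul_rpow (by positivity) hw0, ← Real.rpow_mul hρ0.le, ← Real.rpow_mul hm0.le]
  set δ := γ * (2 * s) - β with hδ
  have hδ0 : 0 ≤ δ := by rw [hδ]; nlinarith
  have e1 : ρ ^ (γ * (2 * s)) * m ^ ((-γ - 1) * (2 * s))
      = ρ ^ β * ((ρ ^ δ * m ^ (-δ)) * m ^ (-(β + 2 * s))) := by
    rw [show γ * (2 * s) = β + δ by rw [hδ]; ring,
      Real.rpow_add hρ0,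
      show (-γ - 1) * (2 * s) = (-δ) + (-(β + 2 * s)) by rw [hδ]; ring,
      Real.rpow_add hm0]
    ring
  have e2 : ρ ^ δ * m ^ (-δ) ≤ 1 := by
    rw [Real.rpow_neg hm0.le, ← div_eq_mul_inv, div_le_one (Real.rpow_pos_of_pos hm0 _)]
    exact Real.rpow_le_rpow hρ0.le hρm hδ0
  have e3 : m ^ (-(β + 2 * s)) ≤ r ^ (-(β + 2 * s)) :=
    Real.rpow_le_rpow_of_nonpos hr hrm (by nlinarith)
  calc (ρ ^ γ / (1 - ρ ^ γ) * γ * m ^ (-γ - 1)) ^ (2 * s)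
      ≤ (2 * ρ ^ γ * γ * m ^ (-γ - 1)) ^ (2 * s) := h1
    _ = (2 * γ) ^ (2 * s) * (ρ ^ β * ((ρ ^ δ * m ^ (-δ)) * m ^ (-(β + 2 * s)))) := by
        rw [h2, h3, e1]
    _ ≤ (2 * γ) ^ (2 * s) * (ρ ^ β * (1 * r ^ (-(β + 2 * s)))) := by
        apply mul_le_mul_of_nonneg_left ?_ (Real.rpow_nonneg (by positivity) _)
        apply mul_le_mul_of_nonneg_left ?_ (Real.rpow_nonneg hρ0.le _)
        exact mul_le_mul e2 e3 (Real.rpow_nonneg hm0.le _) zero_le_one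
    _ = (2 * γ) ^ (2 * s) * (ρ ^ β * r ^ (-(β + 2 * s))) := by rw [one_mul]

def st18_H (n : ℕ) (s γ ρ : ℝ) (p : Rn n × Rn n) : ℝ≥0∞ :=
  if ‖p.1‖ ≤ 1 then
    ENNReal.ofReal ((min 1 (st18_K n γ ρ p.1 * ‖p.1 - p.2‖)) ^ 2
      / ‖p.1 - p.2‖ ^ ((n:ℝ) + 2 * s))
  else 0

lemma st18_H_meas {n : ℕ} {s γ ρ : ℝ} : Measurable (st18_H n s γ ρ) := by
  unfold st18_H st18_K
  apply Measurable.ite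
  · exact measurableSet_le measurable_fst.norm measurable_const
  · fun_prop
  · exact measurable_const

theorem statement18 {n : ℕ} (hn : 3 ≤ n) {s : ℝ} (hs0 : 0 < s) (hs1 : s < 1)
    {γ : ℝ} (hγ : 0 < γ) (c : ℝ)
    {Ω : Set (Rn n)} (hΩo : IsOpen Ω) (hΩb : Bornology.IsBounded Ω)
    (hB2 : Metric.ball (0 : Rn n) 2 ⊆ Ω) :
    Filter.Tendsto (fun ρ : ℝ => gagEnergy n s Ω (phiRho n γ c ρ))
      (nhdsWithin 0 (Set.Ioo (0 : ℝ) 1)) (nhds 0) := by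
  have hn3 : (3:ℝ) ≤ (n:ℝ) := by exact_mod_cast hn
  haveI : Nonempty (Fin n) := ⟨⟨0, by omega⟩⟩
  set β : ℝ := min (2 * s * γ) (((n:ℝ) - 2 * s) / 2) with hβdef
  have hβ0 : 0 < β := lt_min (by positivity) (by nlinarith)
  have hβ1 : β ≤ 2 * s * γ := min_le_left _ _
  have hβs : 0 < β + 2 * s := by positivity
  have hβn : β + 2 * s < (n:ℝ) := by
    have h := min_le_right (2 * s * γ) (((n:ℝ) - 2 * s) / 2)
    rw [← hβdef] at h
    nlinarith
  set I1 : ℝ≥0∞ := ∫⁻ w : Rn n, ENNReal.ofReal (min 1 ‖w‖ ^ 2 / ‖w‖ ^ ((n:ℝ) + 2 * s))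
    with hI1def
  have hI1 : I1 < ∞ := st18_Phi_finite hn hs0 hs1
  set M : ℝ≥0∞ := ∫⁻ x in Metric.closedBall (0 : Rn n) 1,
      ENNReal.ofReal (‖x‖ ^ (-(β + 2 * s))) with hMdef
  have hM : M < ∞ := st18_ball (by omega) hβs hβn
  set C : ℝ≥0∞ := 2 * (ENNReal.ofReal ((2 * γ) ^ (2 * s)) * (M * I1)) with hCdef
  have hC : C ≠ ∞ := by
    rw [hCdef]
    exact ENNReal.mul_ne_top (by norm_num)
      (ENNReal.mul_ne_top ENNReal.ofReal_ne_top (ENNReal.mul_ne_top hM.ne hI1.ne))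
  have hns : 0 < (n:ℝ) + 2 * s := by positivity
  -- the quantitative bound for small ρ
  have hbound : ∀ ρ : ℝ, ρ ∈ Ioo (0:ℝ) 1 → ρ ^ γ ≤ 1 / 2 →
      gagEnergy n s Ω (phiRho n γ c ρ) ≤ C * ENNReal.ofReal (ρ ^ β) := by
    intro ρ hρ hhalf
    obtain ⟨hρ0, hρ1⟩ := hρ
    have hρg0 : 0 < ρ ^ γ := Real.rpow_pos_of_pos hρ0 γ
    have hdenpos : 0 < 1 - ρ ^ γ := by linarith
    have hK0 : ∀ x : Rn n, 0 < st18_K n γ ρ x := by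
      intro x
      have h1 : 0 < max ρ ‖x‖ := lt_of_lt_of_le hρ0 (le_max_left _ _)
      have h2 : 0 < (max ρ ‖x‖) ^ (-γ - 1) := Real.rpow_pos_of_pos h1 _
      rw [st18_K]
      positivity
    have hHm : Measurable (st18_H n s γ ρ) := st18_H_meas
    -- pointwise comparison when the first coordinate has smaller norm
    have hf_le : ∀ p : Rn n × Rn n, ‖p.1‖ ≤ ‖p.2‖ →
        ENNReal.ofReal (|phiRho n γ c ρ p.1 - phiRho n γ c ρ p.2| ^ 2
            / ‖p.1 - p.2‖ ^ ((n : ℝ) + 2 * s)) ≤ st18_H n s γ ρ p := by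
      intro p hcmp
      by_cases hx1 : ‖p.1‖ ≤ 1
      · simp only [st18_H]
        rw [if_pos hx1]
        apply ENNReal.ofReal_le_ofReal
        apply div_le_div_of_nonneg_right ?_ (Real.rpow_nonneg (norm_nonneg _) _)
        exact pow_le_pow_left₀ (abs_nonneg _) (st18_diff_le hγ hρ0 hρ1 hcmp) 2
      · have h2 : (1:ℝ) ≤ ‖p.2‖ := le_trans (not_le.1 hx1).le hcmp
        rw [st18_phi_const hρ1 (not_le.1 hx1).le, st18_phi_const hρ1 h2, sub_self,
          abs_zero, zero_pow two_ne_zero, zero_div, ENNReal.ofReal_zero]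
        exact zero_le
    have hstep2 : ∀ p : Rn n × Rn n,
        ENNReal.ofReal (|phiRho n γ c ρ p.1 - phiRho n γ c ρ p.2| ^ 2
            / ‖p.1 - p.2‖ ^ ((n : ℝ) + 2 * s))
          ≤ st18_H n s γ ρ p + st18_H n s γ ρ p.swap := by
      intro p
      rcases le_total ‖p.1‖ ‖p.2‖ with h | h
      · exact le_trans (hf_le p h) le_self_add
      · have hsymm : ENNReal.ofReal (|phiRho n γ c ρ p.1 - phiRho n γ c ρ p.2| ^ 2
            / ‖p.1 - p.2‖ ^ ((n : ℝ) + 2 * s))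
            = ENNReal.ofReal (|phiRho n γ c ρ p.2 - phiRho n γ c ρ p.1| ^ 2
            / ‖p.2 - p.1‖ ^ ((n : ℝ) + 2 * s)) := by
          rw [abs_sub_comm, norm_sub_rev]
        rw [hsymm]
        exact le_trans (hf_le p.swap h) le_add_self
    -- translation invariance helper
    have hneg : ∀ G : Rn n → ℝ≥0∞, Measurable G →
        (∫⁻ y : Rn n, G (-y)) = ∫⁻ y : Rn n, G y := by
      intro G hG
      conv_rhs => rw [← Measure.map_neg_eq_self (volume : Measure (Rn n))]
      rw [lintegral_map hG measurable_neg]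
    -- inner integral computation
    have hinner : ∀ x : Rn n, (∫⁻ y : Rn n, st18_H n s γ ρ (x, y))
        = (if ‖x‖ ≤ 1 then ENNReal.ofReal (st18_K n γ ρ x ^ (2 * s)) else 0) * I1 := by
      intro x
      by_cases hx1 : ‖x‖ ≤ 1
      · rw [if_pos hx1]
        have hFx : Measurable (fun z : Rn n =>
            ENNReal.ofReal ((min 1 (st18_K n γ ρ x * ‖z‖)) ^ 2
              / ‖z‖ ^ ((n:ℝ) + 2 * s))) := by fun_prop
        calc (∫⁻ y : Rn n, st18_H n s γ ρ (x, y))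
            = ∫⁻ y : Rn n, (fun z : Rn n =>
                ENNReal.ofReal ((min 1 (st18_K n γ ρ x * ‖z‖)) ^ 2
                  / ‖z‖ ^ ((n:ℝ) + 2 * s))) (x - y) := by
              apply lintegral_congr
              intro y
              simp only [st18_H]
              rw [if_pos hx1]
          _ = ∫⁻ y : Rn n, (fun w : Rn n =>
                (fun z : Rn n => ENNReal.ofReal ((min 1 (st18_K n γ ρ x * ‖z‖)) ^ 2
                  / ‖z‖ ^ ((n:ℝ) + 2 * s))) (x + w)) (-y) := by
              simp only [sub_eq_add_neg]
          _ = ∫⁻ w : Rn n, (fun z : Rn n =>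
                ENNReal.ofReal ((min 1 (st18_K n γ ρ x * ‖z‖)) ^ 2
                  / ‖z‖ ^ ((n:ℝ) + 2 * s))) (x + w) :=
              hneg _ (hFx.comp (measurable_id.const_add x))
          _ = ∫⁻ z : Rn n, ENNReal.ofReal ((min 1 (st18_K n γ ρ x * ‖z‖)) ^ 2
                / ‖z‖ ^ ((n:ℝ) + 2 * s)) :=
              lintegral_add_left_eq_self (fun z : Rn n =>
                ENNReal.ofReal ((min 1 (st18_K n γ ρ x * ‖z‖)) ^ 2
                  / ‖z‖ ^ ((n:ℝ) + 2 * s))) x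
          _ = ENNReal.ofReal (st18_K n γ ρ x ^ (2 * s)) * I1 := by
              rw [hI1def]
              exact st18_scale (hK0 x) hns
      · rw [if_neg hx1]
        have : ∀ y : Rn n, st18_H n s γ ρ (x, y) = 0 := by
          intro y
          simp only [st18_H]
          rw [if_neg hx1]
        simp [this]
    -- the bound on the H-integral
    have hH_le : (∫⁻ p : Rn n × Rn n, st18_H n s γ ρ p)
        ≤ ENNReal.ofReal ((2 * γ) ^ (2 * s) * ρ ^ β) * (M * I1) := by
      rw [Measure.volume_eq_prod, lintegral_prod _ hHm.aemeasurable]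
      calc (∫⁻ x : Rn n, ∫⁻ y : Rn n, st18_H n s γ ρ (x, y))
          = ∫⁻ x : Rn n,
              (if ‖x‖ ≤ 1 then ENNReal.ofReal (st18_K n γ ρ x ^ (2 * s)) else 0) * I1 :=
            lintegral_congr hinner
        _ ≤ ∫⁻ x : Rn n, ENNReal.ofReal ((2 * γ) ^ (2 * s) * ρ ^ β)
              * ((Metric.closedBall (0 : Rn n) 1).indicator
                  (fun x => ENNReal.ofReal (‖x‖ ^ (-(β + 2 * s)))) x * I1) := by
            apply lintegral_mono_ae
            have h0 : ∀ᵐ x : Rn n ∂volume, x ≠ 0 := by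
              have hset : {x : Rn n | ¬ x ≠ 0} = {0} := by ext x; simp
              rw [ae_iff, hset]
              exact measure_singleton 0
            refine h0.mono fun x hx => ?_
            by_cases hx1 : ‖x‖ ≤ 1
            · rw [if_pos hx1,
                indicator_of_mem (show x ∈ Metric.closedBall (0 : Rn n) 1 by
                  simpa [Metric.mem_closedBall, dist_zero_right] using hx1),
                ← mul_assoc, ← ENNReal.ofReal_mul (by positivity)]
              apply mul_le_mul_left
              apply ENNReal.ofReal_le_ofReal
              have hxn : 0 < ‖x‖ := norm_pos_iff.mpr hx
              have hkb := st18_K_bound hγ hs0 hρ0 hhalf hxn hβ0 hβ1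
              calc st18_K n γ ρ x ^ (2 * s)
                  ≤ (2 * γ) ^ (2 * s) * (ρ ^ β * ‖x‖ ^ (-(β + 2 * s))) := by
                    simpa [st18_K] using hkb
                _ = (2 * γ) ^ (2 * s) * ρ ^ β * ‖x‖ ^ (-(β + 2 * s)) := by ring
            · rw [if_neg hx1, zero_mul]
              exact zero_le
        _ = ENNReal.ofReal ((2 * γ) ^ (2 * s) * ρ ^ β) * (M * I1) := by
            rw [lintegral_const_mul' _ _ ENNReal.ofReal_ne_top]
            congr 1
            rw [lintegral_mul_const' I1 _ hI1.ne,
              lintegral_indicator measurableSet_closedBall, ← hMdef]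
    -- assembling
    calc gagEnergy n s Ω (phiRho n γ c ρ)
        ≤ ∫⁻ p : Rn n × Rn n, ENNReal.ofReal (|phiRho n γ c ρ p.1 - phiRho n γ c ρ p.2| ^ 2
            / ‖p.1 - p.2‖ ^ ((n : ℝ) + 2 * s)) := setLIntegral_le_lintegral _ _
      _ ≤ ∫⁻ p : Rn n × Rn n, (st18_H n s γ ρ p + st18_H n s γ ρ p.swap) :=
          lintegral_mono hstep2
      _ = (∫⁻ p : Rn n × Rn n, st18_H n s γ ρ p)
            + ∫⁻ p : Rn n × Rn n, st18_H n s γ ρ p.swap :=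
          lintegral_add_left hHm _
      _ = 2 * ∫⁻ p : Rn n × Rn n, st18_H n s γ ρ p := by
          have hswap : (∫⁻ p : Rn n × Rn n, st18_H n s γ ρ p.swap)
              = ∫⁻ p : Rn n × Rn n, st18_H n s γ ρ p := by
            rw [Measure.volume_eq_prod]
            exact lintegral_prod_swap _
          rw [hswap, two_mul]
      _ ≤ 2 * (ENNReal.ofReal ((2 * γ) ^ (2 * s) * ρ ^ β) * (M * I1)) :=
          mul_le_mul_right hH_le 2
      _ = C * ENNReal.ofReal (ρ ^ β) := by
          rw [hCdef, ENNReal.ofReal_mul (by positivity)]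
          ring
  -- eventual bound
  have hev : ∀ᶠ ρ in 𝓝[Ioo (0:ℝ) 1] 0,
      gagEnergy n s Ω (phiRho n γ c ρ) ≤ C * ENNReal.ofReal (ρ ^ β) := by
    have hε : (0:ℝ) < (1/2 : ℝ) ^ γ⁻¹ := Real.rpow_pos_of_pos (by norm_num) _
    have h1 : ∀ᶠ ρ in 𝓝[Ioo (0:ℝ) 1] 0, ρ < (1/2:ℝ) ^ γ⁻¹ :=
      Filter.Eventually.filter_mono nhdsWithin_le_nhds (eventually_lt_nhds hε)
    refine (h1.and eventually_mem_nhdsWithin).mono ?_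
    rintro ρ ⟨hρε, hρmem⟩
    apply hbound ρ hρmem
    have hlt : ρ ^ γ < ((1/2:ℝ) ^ γ⁻¹) ^ γ := Real.rpow_lt_rpow hρmem.1.le hρε hγ
    rw [← Real.rpow_mul (by norm_num : (0:ℝ) ≤ 1/2), inv_mul_cancel₀ hγ.ne',
      Real.rpow_one] at hlt
    exact hlt.le
  -- limit of the bound
  have hlim : Filter.Tendsto (fun ρ : ℝ => C * ENNReal.ofReal (ρ ^ β))
      (𝓝[Ioo (0:ℝ) 1] 0) (𝓝 0) := by
    have h2 : Filter.Tendsto (fun x : ℝ => x ^ β) (𝓝 0) (𝓝 ((0:ℝ) ^ β)) :=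
      Real.continuousAt_rpow_const 0 β (Or.inr hβ0.le)
    rw [Real.zero_rpow hβ0.ne'] at h2
    have h1 : Filter.Tendsto (fun ρ : ℝ => ρ ^ β) (𝓝[Ioo (0:ℝ) 1] 0) (𝓝 0) :=
      h2.mono_left nhdsWithin_le_nhds
    have h3 : Filter.Tendsto (fun ρ : ℝ => ENNReal.ofReal (ρ ^ β))
        (𝓝[Ioo (0:ℝ) 1] 0) (𝓝 0) := by
      have := (ENNReal.continuous_ofReal.tendsto 0).comp h1
      simpa [Function.comp_def] using this
    have h4 := ENNReal.Tendsto.const_mul h3 (Or.inr hC)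
    simpa using h4
  exact tendsto_of_tendsto_of_tendsto_of_le_of_le' tendsto_const_nhds hlim
    (Filter.Eventually.of_forall fun ρ => zero_le) hev

end
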